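/- The involution sending a cyclically reduced necklace to the necklace of its formal inverse is fixed-point free; consequently, for g ≥ 1 and ℓ ≥ 1, the number of cyclically reduced necklaces of length ℓ in the free group of rank g is even, and the number of cyclically reduced bracelets is exactly half the number of cyclically reduced necklaces. -/

import Mathlib

/-- `a` and `b` are mutually inverse letters. -/
def IsInvPair {α : Type*} (a b : α × Bool) : Prop := a.1 = b.1 ∧ a.2 = !b.2

/-- A word is cyclically reduced if no two cyclically adjacent letters
(including the last/first pair) are mutually inverse. -/
def CyclicallyReduced {α : Type*} (l : List (α × Bool)) : Prop :=
  (l.Chain' fun a b => ¬ IsInvPair a b) ∧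
    ∀ a b, l.getLast? = some a → l.head? = some b → ¬ IsInvPair a b

/-- The formal inverse of a word: reverse it and invert each letter. -/
def formalInv {α : Type*} (l : List (α × Bool)) : List (α × Bool) :=
  (l.map fun a => (a.1, !a.2)).reverse

/-- The set of cyclically reduced necklaces of length `ℓ` over `Fin g`:
equivalence classes of cyclically reduced words under cyclic rotation. -/
def Necklaces (g ℓ : ℕ) : Set (Set (List (Fin g × Bool))) :=
  {c | ∃ l, l.length = ℓ ∧ CyclicallyReduced l ∧ c = {l' | ∃ k, l' = l.rotate k}}

/-- The set of cyclically reduced bracelets of length `ℓ` over `Fin g`: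
equivalence classes under cyclic rotation together with formal inversion. -/
def Bracelets (g ℓ : ℕ) : Set (Set (List (Fin g × Bool))) :=
  {c | ∃ l, l.length = ℓ ∧ CyclicallyReduced l ∧
    c = {l' | (∃ k, l' = l.rotate k) ∨ ∃ k, l' = (formalInv l).rotate k}}

namespace BHNaux

variable {α : Type*}

lemma isInvPair_irrefl (a : α × Bool) : ¬ IsInvPair a a := fun h => by simpa using h.2

lemma isInvPair_comm {a b : α × Bool} (h : IsInvPair a b) : IsInvPair b a :=
  ⟨h.1.symm, by simp [h.2]⟩

@[simp] lemma formalInv_length (l : List (α × Bool)) : (formalInv l).length = l.length := by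
  simp [formalInv]

@[simp] lemma formalInv_formalInv (l : List (α × Bool)) : formalInv (formalInv l) = l := by
  have hid : ((fun a : α × Bool => (a.1, !a.2)) ∘ fun a : α × Bool => (a.1, !a.2)) = id := by
    funext a; simp
  simp [formalInv, List.map_reverse, List.map_map, hid]

lemma formalInv_append (a b : List (α × Bool)) :
    formalInv (a ++ b) = formalInv b ++ formalInv a := by
  simp [formalInv]

lemma getElem_formalInv (l : List (α × Bool)) (i : ℕ) (h : i < l.length) :
    (formalInv l)[i]'(by simpa using h) =
      ((l[l.length - 1 - i]'(by omega)).1, !(l[l.length - 1 - i]'(by omega)).2) := by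
  simp [formalInv, List.getElem_reverse, List.getElem_map]

lemma cr_adj {l : List (α × Bool)} (h : CyclicallyReduced l) (i : ℕ) (hi : i + 1 < l.length) :
    ¬ IsInvPair (l[i]'(by omega)) (l[i+1]'hi) := by
  have := List.isChain_iff_getElem.1 h.1 i (by omega)
  simpa using this

lemma cr_wrap {l : List (α × Bool)} (h : CyclicallyReduced l) (hl : l ≠ []) :
    ¬ IsInvPair (l[l.length - 1]'(by have := List.length_pos_iff.2 hl; omega))
      (l[0]'(List.length_pos_iff.2 hl)) := by
  apply h.2
  · rw [List.getLast?_eq_getElem?, List.getElem?_eq_getElem]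
  · rw [List.head?_eq_getElem?, List.getElem?_eq_getElem]

/-- The key fixed-point-freeness lemma. -/
lemma rotate_ne_formalInv {l : List (α × Bool)} (hl : l ≠ [])
    (hcr : CyclicallyReduced l) (k : ℕ) : l.rotate k ≠ formalInv l := by
  intro heq
  have hn : 0 < l.length := List.length_pos_iff.2 hl
  have H : ∀ i, (hi : i < l.length) → (l[(i + k) % l.length]'(Nat.mod_lt _ hn)) =
      ((l[l.length - 1 - i]'(by omega)).1, !(l[l.length - 1 - i]'(by omega)).2) := by
    intro i hi
    have h1 : i < (l.rotate k).length := by simpa using hi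
    have h2 := List.getElem_of_eq heq h1
    rw [List.getElem_rotate] at h2
    rw [h2, getElem_formalInv l i hi]
  set n := l.length with hndef
  have hr : k % n < n := Nat.mod_lt _ hn
  have hmod : ∀ i, i < n → (i + k) % n = (i + k % n) % n := by
    intro i hi
    rw [Nat.add_mod, Nat.mod_eq_of_lt hi]
  rcases Nat.even_or_odd (k % n) with he | ho
  · obtain ⟨m, hm⟩ := he
    rcases Nat.eq_zero_or_pos m with hm0 | hmpos
    · -- k % n = 0 : the reflection pairs positions n-1 and 0 (wrap case)
      have hk0 : k % n = 0 := by omega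
      have hidx : (n - 1 + k) % n = n - 1 := by
        rw [hmod (n-1) (by omega), hk0, Nat.add_zero]
        exact Nat.mod_eq_of_lt (by omega)
      have h0 := H (n-1) (by omega)
      simp only [← hndef, hidx] at h0
      have h1 : n - 1 - (n - 1) = 0 := by omega
      simp only [h1] at h0
      exact cr_wrap hcr hl ⟨by rw [h0], by rw [h0]⟩
    · -- k % n = 2m, m ≥ 1 : positions m-1 and m are adjacent inverse letters
      have hmlt : m < n := by omega
      have hidx : (n - 1 - m + k) % n = m - 1 := by
        rw [hmod _ (by omega), hm]
        have he2 : n - 1 - m + (m + m) = n + (m - 1) := by omega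
        rw [he2, Nat.add_mod_left]
        exact Nat.mod_eq_of_lt (by omega)
      have h0 := H (n - 1 - m) (by omega)
      simp only [← hndef, hidx] at h0
      have h1 : n - 1 - (n - 1 - m) = m := by omega
      simp only [h1] at h0
      have hadj := cr_adj hcr (m-1) (by omega)
      have h2 : m - 1 + 1 = m := by omega
      simp only [h2] at hadj
      exact hadj ⟨by rw [h0], by rw [h0]⟩
  · -- k % n odd : some position is its own mirror image
    obtain ⟨m, hm⟩ := ho
    have hmlt : m < n := by omega
    have hidx : (n - 1 - m + k) % n = m := by
      rw [hmod _ (by omega), hm]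
      have he2 : n - 1 - m + (2 * m + 1) = n + m := by omega
      rw [he2, Nat.add_mod_left]
      exact Nat.mod_eq_of_lt hmlt
    have h0 := H (n - 1 - m) (by omega)
    simp only [← hndef, hidx] at h0
    have h1 : n - 1 - (n - 1 - m) = m := by omega
    simp only [h1] at h0
    have := congrArg Prod.snd h0
    simp at this

/-- formal inversion preserves cyclic reducedness. -/
lemma cyclicallyReduced_formalInv {l : List (α × Bool)} (h : CyclicallyReduced l) :
    CyclicallyReduced (formalInv l) := by
  rcases eq_or_ne l [] with rfl | hl
  · simpa [formalInv] using h
  have hn : 0 < l.length := List.length_pos_iff.2 hl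
  have hfn : 0 < (formalInv l).length := by simpa using hn
  constructor
  · rw [formalInv, List.Chain', List.isChain_reverse, List.isChain_map]
    refine h.1.imp ?_
    intro a b hab hinv
    exact hab ⟨hinv.1.symm, by have := hinv.2; simpa using congrArg Bool.not this.symm⟩
  · intro a b hla hhb
    rw [List.getLast?_eq_getElem?, List.getElem?_eq_getElem (by omega)] at hla
    rw [List.head?_eq_getElem?, List.getElem?_eq_getElem hfn] at hhb
    obtain rfl : a = (formalInv l)[(formalInv l).length - 1]'(by omega) := by
      exact (Option.some_inj.1 hla).symm
    obtain rfl : b = (formalInv l)[0]'hfn := (Option.some_inj.1 hhb).symm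
    have e1 : (formalInv l).length - 1 = l.length - 1 := by simp
    intro hpair
    have h1 := getElem_formalInv l (l.length - 1) (by omega)
    have h2 := getElem_formalInv l 0 hn
    simp only [e1] at hpair
    rw [h1, h2] at hpair
    have h3 : l.length - 1 - (l.length - 1) = 0 := by omega
    have h4 : l.length - 1 - 0 = l.length - 1 := by omega
    simp only [h3, h4] at hpair
    refine cr_wrap h hl ?_
    obtain ⟨p1, p2⟩ := hpair
    exact ⟨p1.symm, by simpa using congrArg Bool.not p2.symm⟩

/-- the rotation orbit of a word. -/
def orbit (l : List α) : Set (List α) := {l' | ∃ k, l' = l.rotate k}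

lemma self_mem_orbit (l : List α) : l ∈ orbit l := ⟨0, (List.rotate_zero l).symm⟩

lemma rotate_cancel (l : List α) (k : ℕ) : ∃ t, (l.rotate k).rotate t = l := by
  rcases eq_or_ne l [] with rfl | hl
  · exact ⟨0, by simp⟩
  have hn : 0 < l.length := List.length_pos_iff.2 hl
  refine ⟨l.length - k % l.length, ?_⟩
  rw [List.rotate_rotate, ← List.rotate_mod]
  have hr : k % l.length < l.length := Nat.mod_lt _ hn
  have : (k + (l.length - k % l.length)) % l.length = 0 := by
    rw [Nat.add_mod]
    rcases Nat.eq_zero_or_pos (k % l.length) with h0 | hpos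
    · rw [h0]; simp
    · rw [Nat.mod_eq_of_lt (show l.length - k % l.length < l.length by omega)]
      have : k % l.length + (l.length - k % l.length) = l.length := by omega
      rw [this, Nat.mod_self]
  rw [this, List.rotate_zero]

lemma orbit_eq_of_mem {l m : List α} (h : m ∈ orbit l) : orbit m = orbit l := by
  obtain ⟨k, rfl⟩ := h
  ext x
  constructor
  · rintro ⟨j, rfl⟩
    exact ⟨k + j, by rw [List.rotate_rotate]⟩
  · rintro ⟨j, rfl⟩
    obtain ⟨t, ht⟩ := rotate_cancel l k
    exact ⟨t + j, by rw [← List.rotate_rotate, ht]⟩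

lemma formalInv_swap (A B : List (α × Bool)) :
    formalInv (B ++ A) = (formalInv (A ++ B)).rotate B.length := by
  rw [formalInv_append, formalInv_append]
  have := List.rotate_append_length_eq (formalInv B) (formalInv A)
  rw [formalInv_length] at this
  exact this.symm

lemma formalInv_rotate (l : List (α × Bool)) (k : ℕ) :
    ∃ m, formalInv (l.rotate k) = (formalInv l).rotate m := by
  rcases eq_or_ne l [] with rfl | hl
  · exact ⟨0, by simp [formalInv]⟩
  have hn : 0 < l.length := List.length_pos_iff.2 hl
  have hk : k % l.length < l.length := Nat.mod_lt _ hn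
  refine ⟨(l.drop (k % l.length)).length, ?_⟩
  rw [← List.rotate_mod, List.rotate_eq_drop_append_take hk.le, formalInv_swap,
    List.take_append_drop]

lemma image_formalInv_orbit (l : List (α × Bool)) :
    (formalInv '' orbit l : Set (List (α × Bool))) = orbit (formalInv l) := by
  ext x
  constructor
  · rintro ⟨y, ⟨k, rfl⟩, rfl⟩
    obtain ⟨m, hm⟩ := formalInv_rotate l k
    exact ⟨m, hm⟩
  · rintro ⟨k, rfl⟩
    refine ⟨formalInv ((formalInv l).rotate k), ?_, by rw [formalInv_formalInv]⟩
    obtain ⟨m, hm⟩ := formalInv_rotate (formalInv l) k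
    rw [formalInv_formalInv] at hm
    exact ⟨m, hm⟩

end BHNaux

open BHNaux in
/-- Inversion is a fixed-point-free involution on cyclically reduced necklaces;
hence the number of necklaces is even and the number of bracelets is exactly
half the number of necklaces. -/
theorem bracelets_half_necklaces (g ℓ : ℕ) (hg : 1 ≤ g) (hℓ : 1 ≤ ℓ) :
    (∀ l : List (Fin g × Bool), l.length = ℓ → CyclicallyReduced l →
        ∀ k, l.rotate k ≠ formalInv l) ∧
      2 ∣ (Necklaces g ℓ).ncard ∧
      2 * (Bracelets g ℓ).ncard = (Necklaces g ℓ).ncard := by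
  classical
  have hfree : ∀ l : List (Fin g × Bool), l.length = ℓ → CyclicallyReduced l →
      ∀ k, l.rotate k ≠ formalInv l := by
    intro l hlen hcr k
    exact rotate_ne_formalInv (by rintro rfl; simp at hlen; omega) hcr k
  refine ⟨hfree, ?_⟩
  -- basic constructions
  set ψ : Set (List (Fin g × Bool)) → Set (List (Fin g × Bool)) :=
    fun c => c ∪ formalInv '' c with hψdef
  have hψN : ∀ l : List (Fin g × Bool), ψ (orbit l) = orbit l ∪ orbit (formalInv l) := by
    intro l
    rw [hψdef]
    simp only [image_formalInv_orbit]
  have hmemN : ∀ l : List (Fin g × Bool), l.length = ℓ → CyclicallyReduced l →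
      orbit l ∈ Necklaces g ℓ := fun l h1 h2 => ⟨l, h1, h2, rfl⟩
  have hmemB : ∀ l : List (Fin g × Bool), l.length = ℓ → CyclicallyReduced l →
      orbit l ∪ orbit (formalInv l) ∈ Bracelets g ℓ := fun l h1 h2 => ⟨l, h1, h2, rfl⟩
  have hneq : ∀ l : List (Fin g × Bool), l.length = ℓ → CyclicallyReduced l →
      orbit l ≠ orbit (formalInv l) := by
    intro l h1 h2 he
    have hmem : formalInv l ∈ orbit l := by
      rw [he]; exact self_mem_orbit _
    obtain ⟨k, hk⟩ := hmem
    exact hfree l h1 h2 k hk.symm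
  have key : ∀ m l : List (Fin g × Bool),
      ψ (orbit m) = orbit l ∪ orbit (formalInv l) →
      orbit m = orbit l ∨ orbit m = orbit (formalInv l) := by
    intro m l hψ
    rw [hψN m] at hψ
    have hl : l ∈ orbit m ∪ orbit (formalInv m) := by
      rw [hψ]; exact Or.inl (self_mem_orbit l)
    rcases hl with hl | hl
    · exact Or.inl (orbit_eq_of_mem hl).symm
    · right
      obtain ⟨k, rfl⟩ := hl
      obtain ⟨t, ht⟩ := formalInv_rotate (formalInv m) k
      rw [formalInv_formalInv] at ht
      have : formalInv ((formalInv m).rotate k) ∈ orbit m := ⟨t, ht⟩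
      rw [orbit_eq_of_mem this]
  -- finiteness
  have hLfin : {l : List (Fin g × Bool) | l.length = ℓ}.Finite := List.finite_length_eq _ _
  have hNfin : (Necklaces g ℓ).Finite := by
    refine hLfin.finite_subsets.subset ?_
    rintro c ⟨l, hlen, -, rfl⟩ x ⟨k, rfl⟩
    simp [hlen]
  have hBfin : (Bracelets g ℓ).Finite := by
    refine hLfin.finite_subsets.subset ?_
    rintro c ⟨l, hlen, -, rfl⟩ x hx
    rcases hx with ⟨k, rfl⟩ | ⟨k, rfl⟩ <;> simp [hlen]
  -- the count
  have hmap : ∀ c ∈ hNfin.toFinset, ψ c ∈ hBfin.toFinset := by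
    intro c hc
    rw [Set.Finite.mem_toFinset] at hc ⊢
    obtain ⟨l, h1, h2, hc4⟩ := hc
    have hcm : c = orbit l := hc4
    rw [hcm, hψN l]
    exact hmemB l h1 h2
  have hcard := Finset.card_eq_sum_card_fiberwise hmap
  have hfib : ∀ b ∈ hBfin.toFinset,
      (hNfin.toFinset.filter (fun c => ψ c = b)).card = 2 := by
    intro b hb
    rw [Set.Finite.mem_toFinset] at hb
    obtain ⟨l, h1, h2, hb4⟩ := hb
    have hb' : b = orbit l ∪ orbit (formalInv l) := hb4
    have hfl1 : (formalInv l).length = ℓ := by simp [h1]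
    have hfl2 : CyclicallyReduced (formalInv l) := cyclicallyReduced_formalInv h2
    have hset : hNfin.toFinset.filter (fun c => ψ c = b) = {orbit l, orbit (formalInv l)} := by
      ext c
      simp only [Finset.mem_filter, Set.Finite.mem_toFinset, Finset.mem_insert,
        Finset.mem_singleton]
      constructor
      · rintro ⟨hcN, hψc⟩
        obtain ⟨m, hm1, hm2, hm4⟩ := hcN
        have hcm : c = orbit m := hm4
        rw [hcm] at hψc ⊢
        exact key m l (by rw [hψc, hb'])
      · rintro (rfl | rfl)
        · exact ⟨hmemN l h1 h2, by rw [hψN l, ← hb']⟩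
        · refine ⟨hmemN _ hfl1 hfl2, ?_⟩
          rw [hψN (formalInv l), formalInv_formalInv, Set.union_comm, ← hb']
    rw [hset, Finset.card_pair (hneq l h1 h2)]
  rw [Finset.sum_congr rfl hfib, Finset.sum_const, smul_eq_mul] at hcard
  have hmain : 2 * (Bracelets g ℓ).ncard = (Necklaces g ℓ).ncard := by
    rw [Set.ncard_eq_toFinset_card _ hNfin, Set.ncard_eq_toFinset_card _ hBfin, hcard,
      Nat.mul_comm]
  exact ⟨⟨(Bracelets g ℓ).ncard, hmain.symm⟩, hmain⟩
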